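/- arXiv:2108.11473 — 3 statements merged into one kernel-verified Lean document; each statement's English description precedes it below -/
import Mathlib

section
/- If H : [0,∞) → [0,∞) is non-decreasing, then 2∫₀^∞ e^{-2t} H(t)² dt ≤ (∫₀^∞ e^{-t} H(t) dt)². -/
open MeasureTheory Real Set ENNReal

theorem doubleExp_inequality (H : ℝ → ℝ≥0∞)
    (hmono : MonotoneOn H (Set.Ici 0)) (hmeas : Measurable H) :
    2 * ∫⁻ t in Set.Ioi (0 : ℝ), ENNReal.ofReal (Real.exp (-2 * t)) * (H t) ^ 2
      ≤ (∫⁻ t in Set.Ioi (0 : ℝ), ENNReal.ofReal (Real.exp (-t)) * H t) ^ 2 := by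
  set f : ℝ → ℝ≥0∞ := fun t => ENNReal.ofReal (Real.exp (-t)) * H t with hf_def
  have hf : Measurable f :=
    (measurable_neg.exp.ennreal_ofReal).mul hmeas
  set μ : Measure ℝ := volume.restrict (Set.Ioi (0 : ℝ)) with hμ
  -- the tail integral of `f` is measurable (it is antitone in the endpoint)
  have htail : Measurable (fun s : ℝ => ∫⁻ t in Set.Ioi s, f t) := by
    have : Antitone (fun s : ℝ => ∫⁻ t in Set.Ioi s, f t) := by
      intro a b hab
      exact lintegral_mono_set (Set.Ioi_subset_Ioi hab)
    exact this.measurable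
  -- the inner integral bound
  have hinner : ∀ s ∈ Set.Ioi (0 : ℝ),
      ENNReal.ofReal (Real.exp (-s)) * H s ≤ ∫⁻ t in Set.Ioi s, f t := by
    intro s hs
    have h1 : ∫⁻ t in Set.Ioi s, ENNReal.ofReal (Real.exp (-t)) * H s
        ≤ ∫⁻ t in Set.Ioi s, f t := by
      refine setLIntegral_mono hf (fun t ht => ?_)
      exact mul_le_mul_right (hmono (show (0:ℝ) ≤ s from le_of_lt hs)
        (show (0:ℝ) ≤ t from le_of_lt (hs.trans ht)) (show s ≤ t from le_of_lt ht)) _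
    refine le_trans (le_of_eq ?_) h1
    have h2 : ∫⁻ t in Set.Ioi s, ENNReal.ofReal (Real.exp (-t))
        = ENNReal.ofReal (Real.exp (-s)) := by
      rw [← ofReal_integral_eq_lintegral_ofReal]
      · rw [integral_exp_neg_Ioi]
      · exact (by simpa using exp_neg_integrableOn_Ioi s one_pos :
          IntegrableOn (fun x => rexp (-x)) (Ioi s) volume)
      · exact Filter.Eventually.of_forall fun t => (Real.exp_pos _).le
    rw [lintegral_mul_const _ measurable_neg.exp.ennreal_ofReal, h2]
  -- pointwise bound for the quadratic term
  have hpt : ∀ s ∈ Set.Ioi (0 : ℝ),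
      ENNReal.ofReal (Real.exp (-2 * s)) * H s ^ 2 ≤ f s * ∫⁻ t in Set.Ioi s, f t := by
    intro s hs
    calc ENNReal.ofReal (Real.exp (-2 * s)) * H s ^ 2
        = f s * (ENNReal.ofReal (Real.exp (-s)) * H s) := by
          rw [hf_def]
          have : Real.exp (-2 * s) = Real.exp (-s) * Real.exp (-s) := by
            rw [← Real.exp_add]; ring_nf
          rw [this, ENNReal.ofReal_mul (Real.exp_pos _).le, pow_two]
          ring
      _ ≤ f s * ∫⁻ t in Set.Ioi s, f t := mul_le_mul_right (hinner s hs) _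
  -- two indicator functions on the product space
  set S₁ : Set (ℝ × ℝ) := {q : ℝ × ℝ | q.1 < q.2} with hS₁
  set S₂ : Set (ℝ × ℝ) := {q : ℝ × ℝ | q.2 < q.1} with hS₂
  have hS₁m : MeasurableSet S₁ := measurableSet_lt measurable_fst measurable_snd
  have hS₂m : MeasurableSet S₂ := measurableSet_lt measurable_snd measurable_fst
  set g : ℝ × ℝ → ℝ≥0∞ := fun q => f q.1 * f q.2 with hg
  have hgm : Measurable g := (hf.comp measurable_fst).mul (hf.comp measurable_snd)
  -- bound the target by the integral over the upper triangle
  have key₁ : (∫⁻ t in Set.Ioi (0 : ℝ),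
      ENNReal.ofReal (Real.exp (-2 * t)) * H t ^ 2) ≤ ∫⁻ q, S₁.indicator g q ∂(μ.prod μ) := by
    rw [lintegral_prod _ (hgm.indicator hS₁m).aemeasurable]
    have hrepr : ∀ s ∈ Set.Ioi (0 : ℝ),
        (∫⁻ t, S₁.indicator g (s, t) ∂μ) = f s * ∫⁻ t in Set.Ioi s, f t := by
      intro s hs
      have heq : (fun t => S₁.indicator g (s, t))
          = (Set.Ioi s).indicator (fun t => f s * f t) := by
        funext t
        simp only [Set.indicator, hS₁, Set.mem_setOf_eq, Set.mem_Ioi, hg]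
      rw [heq, lintegral_indicator measurableSet_Ioi _, hμ,
        Measure.restrict_restrict measurableSet_Ioi,
        Set.inter_eq_left.mpr (Set.Ioi_subset_Ioi (le_of_lt hs)),
        lintegral_const_mul _ hf]
    have hcongr : (∫⁻ s, (∫⁻ t, S₁.indicator g (s, t) ∂μ) ∂μ)
        = ∫⁻ s in Set.Ioi (0 : ℝ), f s * ∫⁻ t in Set.Ioi s, f t :=
      setLIntegral_congr_fun measurableSet_Ioi (fun x hx => hrepr x hx)
    rw [hcongr]
    exact setLIntegral_mono (hf.mul htail) hpt
  -- bound the target by the integral over the lower triangle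
  have key₂ : (∫⁻ t in Set.Ioi (0 : ℝ),
      ENNReal.ofReal (Real.exp (-2 * t)) * H t ^ 2) ≤ ∫⁻ q, S₂.indicator g q ∂(μ.prod μ) := by
    rw [lintegral_prod_symm _ (hgm.indicator hS₂m).aemeasurable]
    have hrepr : ∀ t ∈ Set.Ioi (0 : ℝ),
        (∫⁻ s, S₂.indicator g (s, t) ∂μ) = f t * ∫⁻ s in Set.Ioi t, f s := by
      intro t ht
      have heq : (fun s => S₂.indicator g (s, t))
          = (Set.Ioi t).indicator (fun s => f s * f t) := by
        funext s
        simp only [Set.indicator, hS₂, Set.mem_setOf_eq, Set.mem_Ioi, hg]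
      rw [heq, lintegral_indicator measurableSet_Ioi _, hμ,
        Measure.restrict_restrict measurableSet_Ioi,
        Set.inter_eq_left.mpr (Set.Ioi_subset_Ioi (le_of_lt ht)),
        lintegral_mul_const _ hf, mul_comm]
    have hcongr : (∫⁻ t, (∫⁻ s, S₂.indicator g (s, t) ∂μ) ∂μ)
        = ∫⁻ t in Set.Ioi (0 : ℝ), f t * ∫⁻ s in Set.Ioi t, f s :=
      setLIntegral_congr_fun measurableSet_Ioi (fun x hx => hrepr x hx)
    rw [hcongr]
    exact setLIntegral_mono (hf.mul htail) hpt
  -- the two indicators sum to at most `g`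
  have hsum : ∀ q, S₁.indicator g q + S₂.indicator g q ≤ g q := by
    intro q
    rcases lt_trichotomy q.1 q.2 with h | h | h
    · rw [Set.indicator_of_mem (show q ∈ S₁ from h),
        Set.indicator_of_notMem (show q ∉ S₂ from lt_asymm h), add_zero]
    · rw [Set.indicator_of_notMem (show q ∉ S₁ from fun h' => absurd h (ne_of_lt h')),
        zero_add]
      exact Set.indicator_le_self _ _ q
    · rw [Set.indicator_of_notMem (show q ∉ S₁ from lt_asymm h),
        Set.indicator_of_mem (show q ∈ S₂ from h), zero_add]
  calc 2 * ∫⁻ t in Set.Ioi (0 : ℝ), ENNReal.ofReal (Real.exp (-2 * t)) * H t ^ 2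
      = (∫⁻ t in Set.Ioi (0 : ℝ), ENNReal.ofReal (Real.exp (-2 * t)) * H t ^ 2)
        + ∫⁻ t in Set.Ioi (0 : ℝ), ENNReal.ofReal (Real.exp (-2 * t)) * H t ^ 2 :=
        two_mul _
    _ ≤ (∫⁻ q, S₁.indicator g q ∂(μ.prod μ)) + ∫⁻ q, S₂.indicator g q ∂(μ.prod μ) :=
        add_le_add key₁ key₂
    _ = ∫⁻ q, (S₁.indicator g q + S₂.indicator g q) ∂(μ.prod μ) :=
        (lintegral_add_left (hgm.indicator hS₁m) _).symm
    _ ≤ ∫⁻ q, g q ∂(μ.prod μ) := lintegral_mono hsum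
    _ = (∫⁻ t, f t ∂μ) * ∫⁻ t, f t ∂μ :=
        lintegral_prod_mul hf.aemeasurable hf.aemeasurable
    _ = (∫⁻ t in Set.Ioi (0 : ℝ), ENNReal.ofReal (Real.exp (-t)) * H t) ^ 2 := by
        rw [pow_two]
end

section
/- Suppose that for all f ∈ F_a we have (∬ γ(x−y) f²(x) f²(y) dx dy)^{1/2} ≤ σ^{1/2} · ℰ_a(f,f)^{α/(2a)} with best constant σ, where 0 < α < 2a. Then ℳ_{a,d}(γ,1) := sup_{g∈F_a} { (∬ g²(x)g²(y)γ(x−y) dx dy)^{1/2} − (1/2)ℰ_a(g,g) } equals (α/a)^{α/(2a−α)} · ((2a−α)/(2a)) · σ^{a/(2a−α)}. -/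
open Real MeasureTheory

/-- The Fourier transform `ĝ(ξ) = ∫ e^{-i x·ξ} g(x) dx`. -/
noncomputable def fourierKer (d : ℕ) (g : EuclideanSpace ℝ (Fin d) → ℝ)
    (ξ : EuclideanSpace ℝ (Fin d)) : ℂ :=
  ∫ x, Complex.exp (-Complex.I * (inner ℝ x ξ : ℝ)) * (g x : ℂ)

/-- The Dirichlet-type energy `ℰ_a(g,g) = (2π)^{-d} ∫ |ξ|^a |ĝ(ξ)|² dξ`. -/
noncomputable def energyE (d : ℕ) (a : ℝ) (g : EuclideanSpace ℝ (Fin d) → ℝ) : ℝ :=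
  (2 * Real.pi) ^ (-(d : ℝ)) * ∫ ξ, ‖ξ‖ ^ a * (‖fourierKer d g ξ‖) ^ 2

/-- The class `F_a` of normalized functions with finite energy. -/
noncomputable def classFa (d : ℕ) (a : ℝ) : Set (EuclideanSpace ℝ (Fin d) → ℝ) :=
  { f | (∫ x, (f x) ^ 2) = 1 ∧
        Integrable (fun ξ => ‖ξ‖ ^ a * (‖fourierKer d f ξ‖) ^ 2) }

/-- The variational constant `ℳ_{a,d}(γ,1)`. -/
noncomputable def constM1 (d : ℕ) (a : ℝ) (γ : EuclideanSpace ℝ (Fin d) → ℝ) : ℝ :=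
  sSup { r : ℝ | ∃ g ∈ classFa d a,
    r = Real.sqrt (∫ x, ∫ y, (g x) ^ 2 * (g y) ^ 2 * γ (x - y))
          - 1 / 2 * energyE d a g }

/-- rescaled function -/
noncomputable def scl (d : ℕ) (t : ℝ) (g : EuclideanSpace ℝ (Fin d) → ℝ) :
    EuclideanSpace ℝ (Fin d) → ℝ :=
  fun x => t ^ ((d : ℝ) / 2) * g (t • x)

lemma finrank_E (d : ℕ) : Module.finrank ℝ (EuclideanSpace ℝ (Fin d)) = d := by
  simp [finrank_euclideanSpace]

lemma scl_sq_integral (d : ℕ) (t : ℝ) (ht : 0 < t) (g : EuclideanSpace ℝ (Fin d) → ℝ) :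
    (∫ x, (scl d t g x) ^ 2) = ∫ x, (g x) ^ 2 := by
  have h1 : (∫ x, (scl d t g x) ^ 2)
      = ∫ x, t ^ (d:ℝ) * (fun y => (g y)^2) (t • x) := by
    congr 1 with x
    simp only [scl]
    rw [mul_pow, ← rpow_natCast (t ^ ((d:ℝ)/2)) 2, ← rpow_mul ht.le]
    norm_num
  rw [h1, integral_const_mul, MeasureTheory.Measure.integral_comp_smul volume (fun y => (g y)^2) t,
    finrank_E]
  rw [abs_of_nonneg (by positivity), smul_eq_mul, ← mul_assoc, ← rpow_natCast t d]
  rw [← Real.rpow_neg ht.le, ← rpow_add ht]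
  simp

lemma fourierKer_scl (d : ℕ) (t : ℝ) (ht : 0 < t) (g : EuclideanSpace ℝ (Fin d) → ℝ)
    (ξ : EuclideanSpace ℝ (Fin d)) :
    fourierKer d (scl d t g) ξ
      = (t ^ (-(d:ℝ)/2) : ℝ) * fourierKer d g (t⁻¹ • ξ) := by
  have key := MeasureTheory.Measure.integral_comp_smul (volume : Measure (EuclideanSpace ℝ (Fin d)))
      (fun y => Complex.exp (-Complex.I * ((inner ℝ y (t⁻¹ • ξ) : ℝ) : ℂ)) * ((g y : ℝ) : ℂ)) t
  rw [finrank_E, abs_of_nonneg (by positivity)] at key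
  have hF : ∀ x : EuclideanSpace ℝ (Fin d),
      Complex.exp (-Complex.I * ((inner ℝ x ξ : ℝ) : ℂ)) * ((scl d t g x : ℝ) : ℂ)
      = ((t ^ ((d:ℝ)/2) : ℝ) : ℂ) *
        (Complex.exp (-Complex.I * ((inner ℝ (t • x) (t⁻¹ • ξ) : ℝ) : ℂ)) * ((g (t • x) : ℝ) : ℂ)) := by
    intro x
    have hinner : (inner ℝ (t • x) (t⁻¹ • ξ) : ℝ) = inner ℝ x ξ := by
      rw [real_inner_smul_right, real_inner_smul_left, ← mul_assoc,
        inv_mul_cancel₀ ht.ne', one_mul]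
    rw [hinner]
    simp only [scl]
    push_cast
    ring
  have hr : ((t ^ (d:ℕ))⁻¹ : ℝ) * t ^ ((d:ℝ)/2) = t ^ (-(d:ℝ)/2) := by
    rw [← rpow_natCast t d, ← Real.rpow_neg ht.le, ← rpow_add ht]
    ring_nf
  calc fourierKer d (scl d t g) ξ
      = ∫ x, ((t ^ ((d:ℝ)/2) : ℝ) : ℂ) *
        (Complex.exp (-Complex.I * ((inner ℝ (t • x) (t⁻¹ • ξ) : ℝ) : ℂ)) * ((g (t • x) : ℝ) : ℂ)) := by
        unfold fourierKer; congr 1 with x; exact hF x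
    _ = ((t ^ ((d:ℝ)/2) : ℝ) : ℂ) * ∫ x,
        Complex.exp (-Complex.I * ((inner ℝ (t • x) (t⁻¹ • ξ) : ℝ) : ℂ)) * ((g (t • x) : ℝ) : ℂ) :=
        integral_const_mul _ _
    _ = ((t ^ ((d:ℝ)/2) : ℝ) : ℂ) * ((t ^ (d:ℕ))⁻¹ : ℝ) • ∫ y,
        Complex.exp (-Complex.I * ((inner ℝ y (t⁻¹ • ξ) : ℝ) : ℂ)) * ((g y : ℝ) : ℂ) := by rw [← key]
    _ = (t ^ (-(d:ℝ)/2) : ℝ) * fourierKer d g (t⁻¹ • ξ) := by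
        unfold fourierKer
        rw [Complex.real_smul, ← mul_assoc, ← Complex.ofReal_mul, mul_comm (t ^ ((d:ℝ)/2)), hr]

lemma energy_integrand_scl (d : ℕ) (a t : ℝ) (ht : 0 < t) (g : EuclideanSpace ℝ (Fin d) → ℝ) :
    (fun ξ => ‖ξ‖ ^ a * (‖fourierKer d (scl d t g) ξ‖) ^ 2)
      = fun ξ => t ^ (a - (d:ℝ)) *
          ((fun η => ‖η‖ ^ a * (‖fourierKer d g η‖) ^ 2) (t⁻¹ • ξ)) := by
  funext ξ
  rw [fourierKer_scl d t ht g ξ]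
  have h1 : ‖(((t ^ (-(d:ℝ)/2) : ℝ) : ℂ) * fourierKer d g (t⁻¹ • ξ))‖
      = t ^ (-(d:ℝ)/2) * ‖(fourierKer d g (t⁻¹ • ξ))‖ := by
    rw [norm_mul, Complex.norm_real, Real.norm_of_nonneg (by positivity)]
  rw [h1]
  have h2 : ‖ξ‖ ^ a = t ^ a * ‖t⁻¹ • ξ‖ ^ a := by
    have : ‖ξ‖ = t * ‖t⁻¹ • ξ‖ := by
      rw [norm_smul, norm_inv, Real.norm_eq_abs, abs_of_nonneg ht.le]
      field_simp
    rw [this, mul_rpow ht.le (norm_nonneg _)]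
  rw [h2, mul_pow, ← rpow_natCast (t ^ (-(d:ℝ)/2)) 2, ← rpow_mul ht.le]
  rw [show (-(d:ℝ)/2 * (2:ℕ)) = -(d:ℝ) by push_cast; ring]
  rw [show (a - (d:ℝ)) = a + (-(d:ℝ)) by ring, rpow_add ht]
  ring

lemma energyE_scl (d : ℕ) (a t : ℝ) (ht : 0 < t) (g : EuclideanSpace ℝ (Fin d) → ℝ) :
    energyE d a (scl d t g) = t ^ a * energyE d a g := by
  unfold energyE
  rw [energy_integrand_scl d a t ht g, integral_const_mul,
    MeasureTheory.Measure.integral_comp_inv_smul volume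
      (fun η => ‖η‖ ^ a * (‖fourierKer d g η‖) ^ 2) t,
    finrank_E, abs_of_nonneg (by positivity : (0:ℝ) ≤ t ^ d), smul_eq_mul]
  rw [← rpow_natCast t d, show (a - (d:ℝ)) = a + (-(d:ℝ)) by ring, rpow_add ht]
  set I := ∫ ξ, ‖ξ‖ ^ a * (‖fourierKer d g ξ‖) ^ 2
  have h0 : t ^ (-(d:ℝ)) * t ^ ((d:ℝ)) = 1 := by rw [← rpow_add ht]; norm_num
  linear_combination ((2 * π) ^ (-(d:ℝ)) * t ^ a * I) * h0

lemma integrable_scl (d : ℕ) (a t : ℝ) (ht : 0 < t) (g : EuclideanSpace ℝ (Fin d) → ℝ)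
    (hg : Integrable (fun ξ => ‖ξ‖ ^ a * (‖fourierKer d g ξ‖) ^ 2)) :
    Integrable (fun ξ => ‖ξ‖ ^ a * (‖fourierKer d (scl d t g) ξ‖) ^ 2) := by
  rw [energy_integrand_scl d a t ht g]
  exact (hg.comp_smul (inv_ne_zero ht.ne')).const_mul _

lemma scl_mem_classFa (d : ℕ) (a t : ℝ) (ht : 0 < t) (g : EuclideanSpace ℝ (Fin d) → ℝ)
    (hg : g ∈ classFa d a) : scl d t g ∈ classFa d a := by
  refine ⟨?_, integrable_scl d a t ht g hg.2⟩
  rw [scl_sq_integral d t ht g]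
  exact hg.1

lemma doubleInt_scl (d : ℕ) (α t : ℝ) (ht : 0 < t) (γ : EuclideanSpace ℝ (Fin d) → ℝ)
    (hhom : ∀ c : ℝ, 0 < c → ∀ x, γ (c • x) = c ^ (-α) * γ x)
    (g : EuclideanSpace ℝ (Fin d) → ℝ) :
    (∫ x, ∫ y, (scl d t g x) ^ 2 * (scl d t g y) ^ 2 * γ (x - y))
      = t ^ α * ∫ x, ∫ y, (g x) ^ 2 * (g y) ^ 2 * γ (x - y) := by
  have hγ : ∀ w, γ (t⁻¹ • w) = t ^ α * γ w := by
    intro w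
    rw [hhom t⁻¹ (by positivity) w, Real.inv_rpow ht.le, Real.rpow_neg ht.le, inv_inv]
  have hsq : ∀ u, (scl d t g u) ^ 2 = t ^ ((d:ℝ)) * (g (t • u)) ^ 2 := by
    intro u
    simp only [scl]
    rw [mul_pow, ← rpow_natCast (t ^ ((d:ℝ)/2)) 2, ← rpow_mul ht.le]
    norm_num
  have hid : ∀ x : EuclideanSpace ℝ (Fin d), t⁻¹ • (t • x) = x := fun x => by
    rw [smul_smul, inv_mul_cancel₀ ht.ne', one_smul]
  have h0 : t ^ (-(d:ℝ)) * t ^ ((d:ℝ)) = 1 := by rw [← rpow_add ht]; norm_num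
  have habs : |((t ^ (d:ℕ))⁻¹ : ℝ)| = t ^ (-(d:ℝ)) := by
    rw [abs_of_nonneg (by positivity), ← rpow_natCast t d, ← Real.rpow_neg ht.le]
  have hinner : ∀ x : EuclideanSpace ℝ (Fin d),
      (∫ y, (scl d t g y) ^ 2 * γ (x - y)) = t ^ α * ∫ v, (g v) ^ 2 * γ (t • x - v) := by
    intro x
    have e1 : ∀ y, (scl d t g y) ^ 2 * γ (x - y)
        = (fun v => t ^ ((d:ℝ)) * ((g v) ^ 2 * (t ^ α * γ (t • x - v)))) (t • y) := by
      intro y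
      simp only
      rw [hsq y]
      have h2 : γ (x - y) = t ^ α * γ (t • x - t • y) := by
        have h3 : x - y = t⁻¹ • (t • x - t • y) := by rw [smul_sub, hid, hid]
        rw [h3, hγ]
      rw [h2]; ring
    have key := MeasureTheory.Measure.integral_comp_smul
      (volume : Measure (EuclideanSpace ℝ (Fin d)))
      (fun v => t ^ ((d:ℝ)) * ((g v) ^ 2 * (t ^ α * γ (t • x - v)))) t
    rw [finrank_E, habs, smul_eq_mul] at key
    calc (∫ y, (scl d t g y) ^ 2 * γ (x - y))
        = ∫ y, (fun v => t ^ ((d:ℝ)) * ((g v) ^ 2 * (t ^ α * γ (t • x - v)))) (t • y) := by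
          congr 1 with y; exact e1 y
      _ = t ^ (-(d:ℝ)) * ∫ v, t ^ ((d:ℝ)) * ((g v) ^ 2 * (t ^ α * γ (t • x - v))) := key
      _ = t ^ α * ∫ v, (g v) ^ 2 * γ (t • x - v) := by
          rw [integral_const_mul]
          have h1 : (∫ v, (g v) ^ 2 * (t ^ α * γ (t • x - v)))
              = t ^ α * ∫ v, (g v) ^ 2 * γ (t • x - v) := by
            rw [← integral_const_mul]; congr 1 with v; ring
          rw [h1]
          set J := ∫ v, (g v) ^ 2 * γ (t • x - v)
          linear_combination (t ^ α * J) * h0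
  have key2 := MeasureTheory.Measure.integral_comp_smul
    (volume : Measure (EuclideanSpace ℝ (Fin d)))
    (fun u => t ^ ((d:ℝ)) * t ^ α * ((g u) ^ 2 * ∫ v, (g v) ^ 2 * γ (u - v))) t
  rw [finrank_E, habs, smul_eq_mul] at key2
  calc (∫ x, ∫ y, (scl d t g x) ^ 2 * (scl d t g y) ^ 2 * γ (x - y))
      = ∫ x, (scl d t g x) ^ 2 * ∫ y, (scl d t g y) ^ 2 * γ (x - y) := by
        congr 1 with x
        rw [← integral_const_mul]; congr 1 with y; ring
    _ = ∫ x, (fun u => t ^ ((d:ℝ)) * t ^ α * ((g u) ^ 2 * ∫ v, (g v) ^ 2 * γ (u - v))) (t • x) := by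
        congr 1 with x
        simp only
        rw [hinner x, hsq x]
        ring
    _ = t ^ (-(d:ℝ)) * ∫ u, t ^ ((d:ℝ)) * t ^ α * ((g u) ^ 2 * ∫ v, (g v) ^ 2 * γ (u - v)) := key2
    _ = t ^ α * ∫ u, (g u) ^ 2 * ∫ v, (g v) ^ 2 * γ (u - v) := by
        rw [integral_const_mul]
        set J := ∫ u, (g u) ^ 2 * ∫ v, (g v) ^ 2 * γ (u - v)
        linear_combination (t ^ α * J) * h0
    _ = t ^ α * ∫ x, ∫ y, (g x) ^ 2 * (g y) ^ 2 * γ (x - y) := by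
        congr 1
        congr 1 with u
        rw [← integral_const_mul]; congr 1 with v; ring

lemma energyE_nonneg (d : ℕ) (a : ℝ) (g : EuclideanSpace ℝ (Fin d) → ℝ) :
    0 ≤ energyE d a g := by
  unfold energyE
  apply mul_nonneg (by positivity)
  apply integral_nonneg
  intro ξ; positivity


lemma exp_id {β : ℝ} (hβ1 : β < 1) : 1 + β / (1 - β) = 1 / (1 - β) := by
  have : (1:ℝ) - β ≠ 0 := by linarith
  field_simp
  ring

lemma phi_eq {C β : ℝ} (hC : 0 < C) (hβ0 : 0 < β) (hβ1 : β < 1) :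
    C * ((2 * C * β) ^ (1 / (1 - β) : ℝ)) ^ β - (2 * C * β) ^ (1 / (1 - β) : ℝ) / 2
      = (1 - β) * (2 * β) ^ (β / (1 - β) : ℝ) * C ^ (1 / (1 - β) : ℝ) := by
  have h1β : (0:ℝ) < 1 - β := by linarith
  have h2Cβ : (0:ℝ) < 2 * C * β := by positivity
  set s : ℝ := (2 * C * β) ^ (1 / (1 - β) : ℝ) with hs
  have hspos : 0 < s := rpow_pos_of_pos h2Cβ _
  have hsβ : s ^ (β : ℝ) = (2 * C * β) ^ (β / (1 - β) : ℝ) := by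
    rw [hs, ← rpow_mul h2Cβ.le]
    congr 1
    field_simp
  have hs1 : s = (2 * C * β) * (2 * C * β) ^ (β / (1 - β) : ℝ) := by
    rw [hs]
    nth_rewrite 2 [show (2*C*β : ℝ) = (2*C*β) ^ (1:ℝ) by rw [rpow_one]]
    rw [← rpow_add h2Cβ]
    congr 1
    have : (1:ℝ) - β ≠ 0 := by linarith
    field_simp
    ring
  have hsplit : ((2 * C * β) : ℝ) ^ (β / (1 - β) : ℝ)
      = C ^ (β / (1 - β) : ℝ) * (2 * β) ^ (β / (1 - β) : ℝ) := by
    rw [show (2*C*β : ℝ) = C * (2*β) by ring, mul_rpow hC.le (by positivity)]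
  have hCC : C * C ^ (β / (1 - β) : ℝ) = C ^ (1 / (1 - β) : ℝ) := by
    nth_rewrite 1 [show C = C ^ (1:ℝ) by rw [rpow_one]]
    rw [← rpow_add hC, exp_id hβ1]
  calc C * s ^ (β:ℝ) - s / 2
      = C * s ^ (β:ℝ) - (2 * C * β) * (2 * C * β) ^ (β / (1 - β) : ℝ) / 2 := by rw [← hs1]
    _ = (1 - β) * (2 * β) ^ (β / (1 - β) : ℝ) * C ^ (1 / (1 - β) : ℝ) := by
        rw [hsβ, hsplit, ← hCC]; ring

lemma phi_le {C β t : ℝ} (hC : 0 ≤ C) (hβ0 : 0 < β) (hβ1 : β < 1) (ht : 0 ≤ t) :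
    C * t ^ (β:ℝ) - t / 2 ≤ (1 - β) * (2 * β) ^ (β / (1 - β) : ℝ) * C ^ (1 / (1 - β) : ℝ) := by
  have h1β : (0:ℝ) < 1 - β := by linarith
  rcases eq_or_lt_of_le hC with hC0 | hCpos
  · rw [← hC0]
    rw [zero_rpow (by positivity : (1 / (1 - β) : ℝ) ≠ 0)]
    simp
    positivity
  set s : ℝ := (2 * C * β) ^ (1 / (1 - β) : ℝ) with hs
  have h2Cβ : (0:ℝ) < 2 * C * β := by positivity
  have hspos : 0 < s := rpow_pos_of_pos h2Cβ _
  have hs1β : s ^ (1 - β : ℝ) = 2 * C * β := by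
    rw [hs, ← rpow_mul h2Cβ.le, one_div_mul_cancel (by linarith : (1:ℝ) - β ≠ 0), rpow_one]
  -- geometric mean inequality
  have hgm : t ^ (β:ℝ) * s ^ (1 - β : ℝ) ≤ β * t + (1 - β) * s :=
    Real.geom_mean_le_arith_mean2_weighted hβ0.le h1β.le ht hspos.le (by ring)
  have key : C * t ^ (β:ℝ) - t / 2 ≤ C * s ^ (β:ℝ) - s / 2 := by
    have hstep : C * (t ^ (β:ℝ) * s ^ (1 - β : ℝ)) ≤ C * (β * t + (1 - β) * s) :=
      mul_le_mul_of_nonneg_left hgm hC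
    rw [hs1β] at hstep
    -- C * t^β * (2Cβ) ≤ C * (βt + (1-β)s)
    have hsβs : s ^ (β:ℝ) * (2 * C * β) = s := by
      rw [← hs1β, ← rpow_add hspos]; norm_num
    nlinarith [rpow_pos_of_pos hspos β, rpow_nonneg ht β]
  calc C * t ^ (β:ℝ) - t / 2 ≤ C * s ^ (β:ℝ) - s / 2 := key
    _ = _ := phi_eq hCpos hβ0 hβ1

lemma rpow_half_of_nonpos {x : ℝ} (hx : x ≤ 0) : x ^ (1/2 : ℝ) = 0 := by
  rcases hx.lt_or_eq with h | h
  · rw [Real.rpow_def_of_neg h, show (1/2:ℝ) * π = π/2 by ring, Real.cos_pi_div_two, mul_zero]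
  · rw [h, Real.zero_rpow (by norm_num)]

theorem constM_closed_form (d : ℕ) (hd : 1 ≤ d) (a α σ : ℝ) (ha : 0 < a) (ha2 : a ≤ 2)
    (hα : 0 < α) (hαa : α < 2 * a)
    (γ : EuclideanSpace ℝ (Fin d) → ℝ) (hγpos : ∀ x, 0 ≤ γ x)
    (hhom : ∀ c : ℝ, 0 < c → ∀ x, γ (c • x) = c ^ (-α) * γ x)
    (hσ : IsLeast { c : ℝ | ∀ f ∈ classFa d a,
        Real.sqrt (∫ x, ∫ y, γ (x - y) * (f x) ^ 2 * (f y) ^ 2)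
          ≤ c ^ (1 / 2 : ℝ) * (energyE d a f) ^ (α / (2 * a)) } σ) :
    constM1 d a γ = (α / a) ^ (α / (2 * a - α)) * ((2 * a - α) / (2 * a)) * σ ^ (a / (2 * a - α)) := by
  have h2a : (0:ℝ) < 2 * a := by linarith
  have h2aα : (0:ℝ) < 2 * a - α := by linarith
  set β : ℝ := α / (2 * a) with hβ
  have hβ0 : 0 < β := by positivity
  have hβ1 : β < 1 := by rw [hβ, div_lt_one h2a]; linarith
  have h1β : (0:ℝ) < 1 - β := by linarith
  -- σ is positive
  have hσpos : 0 < σ := by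
    by_contra hle
    push_neg at hle
    have h1 : σ - 1 ∈ { c : ℝ | ∀ f ∈ classFa d a,
        Real.sqrt (∫ x, ∫ y, γ (x - y) * (f x) ^ 2 * (f y) ^ 2)
          ≤ c ^ (1 / 2 : ℝ) * (energyE d a f) ^ (α / (2 * a)) } := by
      intro f hf
      have h2 := hσ.1 f hf
      rw [rpow_half_of_nonpos hle] at h2
      rw [rpow_half_of_nonpos (by linarith : σ - 1 ≤ 0)]
      simpa using h2
    have := hσ.2 h1
    linarith
  set C : ℝ := σ ^ (1/2 : ℝ) with hC
  have hCpos : 0 < C := Real.rpow_pos_of_pos hσpos _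
  set M : ℝ := (1 - β) * (2 * β) ^ (β / (1 - β) : ℝ) * C ^ (1 / (1 - β) : ℝ) with hM
  -- identification of M with the RHS
  have hMrhs : M = (α / a) ^ (α / (2 * a - α)) * ((2 * a - α) / (2 * a)) * σ ^ (a / (2 * a - α)) := by
    have e1 : (2 * β : ℝ) = α / a := by rw [hβ]; field_simp
    have e2 : (β / (1 - β) : ℝ) = α / (2 * a - α) := by
      rw [hβ]
      rw [div_eq_div_iff (by positivity) h2aα.ne']
      field_simp
      try ring
    have e3 : (1 - β : ℝ) = (2 * a - α) / (2 * a) := by rw [hβ]; field_simp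
    have e4 : C ^ (1 / (1 - β) : ℝ) = σ ^ (a / (2 * a - α)) := by
      rw [hC, ← Real.rpow_mul hσpos.le]
      congr 1
      rw [e3]
      field_simp
      try ring
    rw [hM, e4, e1, e2, e3]
    ring
  set S : Set ℝ := { r : ℝ | ∃ g ∈ classFa d a,
    r = Real.sqrt (∫ x, ∫ y, (g x) ^ 2 * (g y) ^ 2 * γ (x - y))
          - 1 / 2 * energyE d a g } with hSdef
  -- commuting the integrand
  have hflip : ∀ g : EuclideanSpace ℝ (Fin d) → ℝ,
      (∫ x, ∫ y, (g x) ^ 2 * (g y) ^ 2 * γ (x - y))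
        = ∫ x, ∫ y, γ (x - y) * (g x) ^ 2 * (g y) ^ 2 := by
    intro g
    congr 1 with x; congr 1 with y; ring
  -- upper bound
  have hub : ∀ r ∈ S, r ≤ M := by
    rintro r ⟨g, hg, rfl⟩
    have hE := energyE_nonneg d a g
    have hsq := hσ.1 g hg
    rw [← hflip g] at hsq
    have h5 : Real.sqrt (∫ x, ∫ y, (g x) ^ 2 * (g y) ^ 2 * γ (x - y)) - 1/2 * energyE d a g
        ≤ C * (energyE d a g) ^ (β : ℝ) - energyE d a g / 2 := by
      linarith
    exact h5.trans (phi_le hCpos.le hβ0 hβ1 hE)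
  -- near-optimizers exist below σ
  have hnot : ∀ c : ℝ, c < σ → ∃ f ∈ classFa d a,
      c ^ (1 / 2 : ℝ) * (energyE d a f) ^ (α / (2 * a))
        < Real.sqrt (∫ x, ∫ y, γ (x - y) * (f x) ^ 2 * (f y) ^ 2) := by
    intro c hc
    by_contra h
    push_neg at h
    exact absurd (hσ.2 (fun f hf => h f hf)) (not_le.2 hc)
  obtain ⟨f₀, hf₀, -⟩ := hnot (σ - 1) (by linarith)
  have hSne : S.Nonempty := ⟨_, f₀, hf₀, rfl⟩
  have hbdd : BddAbove S := ⟨M, hub⟩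
  -- lower bound : for each 0 < c < σ
  have hlb : ∀ c : ℝ, 0 < c → c < σ →
      (1 - β) * (2 * β) ^ (β / (1 - β) : ℝ) * (c ^ (1/2:ℝ)) ^ (1 / (1 - β) : ℝ) ≤ sSup S := by
    intro c hc0 hcσ
    obtain ⟨f, hf, hgt⟩ := hnot c hcσ
    set E : ℝ := energyE d a f with hEdef
    have hE0 : 0 ≤ E := energyE_nonneg d a f
    set s0 : ℝ := Real.sqrt (∫ x, ∫ y, γ (x - y) * (f x) ^ 2 * (f y) ^ 2) with hs0
    have hcc : 0 < c ^ (1/2:ℝ) := Real.rpow_pos_of_pos hc0 _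
    have hmem : ∀ t : ℝ, 0 < t →
        (Real.sqrt (t ^ α * ∫ x, ∫ y, (f x) ^ 2 * (f y) ^ 2 * γ (x - y))
          - 1/2 * (t ^ a * E)) ∈ S := by
      intro t ht
      exact ⟨scl d t f, scl_mem_classFa d a t ht f hf, by
        rw [doubleInt_scl d α t ht γ hhom f, energyE_scl d a t ht f]⟩
    have hval : ∀ t : ℝ, 0 < t →
        Real.sqrt (t ^ α * ∫ x, ∫ y, (f x) ^ 2 * (f y) ^ 2 * γ (x - y))
          = t ^ (α/2 : ℝ) * s0 := by
      intro t ht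
      rw [hflip f, Real.sqrt_mul (Real.rpow_nonneg ht.le α), ← hs0]
      congr 1
      rw [Real.sqrt_eq_rpow, ← Real.rpow_mul ht.le]
      congr 1
      ring
    -- E must be positive
    have hEpos : 0 < E := by
      rcases hE0.lt_or_eq with h | h
      · exact h
      · exfalso
        have hz : c ^ (1 / 2 : ℝ) * E ^ (α / (2 * a)) = 0 := by
          rw [← h, Real.zero_rpow (by positivity : α / (2*a) ≠ 0), mul_zero]
        have hs0pos : 0 < s0 := by linarith [hgt, hz]
        set T : ℝ := (|M| + 1) / s0 with hT
        have hTpos : 0 < T := by positivity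
        set t : ℝ := T ^ (2/α : ℝ) with ht
        have htpos : 0 < t := Real.rpow_pos_of_pos hTpos _
        have htα : t ^ (α/2 : ℝ) = T := by
          rw [ht, ← Real.rpow_mul hTpos.le]
          rw [show (2/α) * (α/2) = 1 by field_simp, Real.rpow_one]
        have hub' := hub _ (hmem t htpos)
        rw [hval t htpos, htα, ← h, mul_zero, mul_zero, sub_zero] at hub'
        have hTs : T * s0 = |M| + 1 := by rw [hT]; field_simp
        have habs := le_abs_self M
        linarith
    -- genuine optimization at the optimal scale
    set C' : ℝ := s0 / E ^ (β : ℝ) with hC'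
    have hEβ : 0 < E ^ (β : ℝ) := Real.rpow_pos_of_pos hEpos _
    have hC'gt : c ^ (1/2:ℝ) < C' := by
      rw [hC', lt_div_iff₀ hEβ]
      exact hgt
    have hC'pos : 0 < C' := hcc.trans hC'gt
    set sstar : ℝ := (2 * C' * β) ^ (1 / (1 - β) : ℝ) with hsstar
    have hsstarpos : 0 < sstar := Real.rpow_pos_of_pos (by positivity) _
    set t : ℝ := (sstar / E) ^ (1/a : ℝ) with ht
    have htpos : 0 < t := Real.rpow_pos_of_pos (by positivity) _
    have hta : t ^ (a : ℝ) = sstar / E := by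
      rw [ht, ← Real.rpow_mul (by positivity : (0:ℝ) ≤ sstar / E)]
      rw [show (1/a) * a = 1 by field_simp, Real.rpow_one]
    have htα2 : t ^ (α/2 : ℝ) = (t ^ (a : ℝ)) ^ (β : ℝ) := by
      rw [← Real.rpow_mul htpos.le]
      congr 1
      rw [hβ]
      field_simp
      try ring
    have hvalue : Real.sqrt (t ^ α * ∫ x, ∫ y, (f x) ^ 2 * (f y) ^ 2 * γ (x - y))
          - 1/2 * (t ^ a * E) = C' * sstar ^ (β : ℝ) - sstar / 2 := by
      rw [hval t htpos, htα2, hta]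
      rw [Real.div_rpow hsstarpos.le hEpos.le, hC']
      field_simp
      try ring
    have hphi := phi_eq hC'pos hβ0 hβ1
    rw [← hsstar] at hphi
    have hle1 : (1 - β) * (2 * β) ^ (β / (1 - β) : ℝ) * (c ^ (1/2:ℝ)) ^ (1 / (1 - β) : ℝ)
        ≤ (1 - β) * (2 * β) ^ (β / (1 - β) : ℝ) * C' ^ (1 / (1 - β) : ℝ) := by
      apply mul_le_mul_of_nonneg_left _ (by positivity)
      exact Real.rpow_le_rpow hcc.le hC'gt.le (by positivity)
    calc (1 - β) * (2 * β) ^ (β / (1 - β) : ℝ) * (c ^ (1/2:ℝ)) ^ (1 / (1 - β) : ℝ)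
        ≤ (1 - β) * (2 * β) ^ (β / (1 - β) : ℝ) * C' ^ (1 / (1 - β) : ℝ) := hle1
      _ = C' * sstar ^ (β : ℝ) - sstar / 2 := hphi.symm
      _ = Real.sqrt (t ^ α * ∫ x, ∫ y, (f x) ^ 2 * (f y) ^ 2 * γ (x - y))
            - 1/2 * (t ^ a * E) := hvalue.symm
      _ ≤ sSup S := le_csSup hbdd (hmem t htpos)
  -- pass to the limit c → σ⁻
  have hlb2 : M ≤ sSup S := by
    have c1 : ContinuousAt (fun c : ℝ => c ^ (1/2 : ℝ)) σ :=
      Real.continuousAt_rpow_const _ _ (Or.inl hσpos.ne')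
    have c3 : ContinuousAt (fun c : ℝ =>
        (1 - β) * (2 * β) ^ (β / (1 - β) : ℝ) * (c ^ (1/2:ℝ)) ^ (1 / (1 - β) : ℝ)) σ :=
      continuousAt_const.mul (c1.rpow_const (Or.inr (by positivity)))
    have htend : Filter.Tendsto (fun c : ℝ =>
        (1 - β) * (2 * β) ^ (β / (1 - β) : ℝ) * (c ^ (1/2:ℝ)) ^ (1 / (1 - β) : ℝ))
        (nhdsWithin σ (Set.Iio σ)) (nhds M) := by
      rw [hM, hC]
      exact c3.tendsto.mono_left nhdsWithin_le_nhds
    apply le_of_tendsto htend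
    have hIoo : Set.Ioo 0 σ ∈ nhdsWithin σ (Set.Iio σ) :=
      Ioo_mem_nhdsLT_of_mem ⟨hσpos, le_refl σ⟩
    filter_upwards [hIoo] with c hc
    exact hlb c hc.1 hc.2
  have hrfl : constM1 d a γ = sSup S := rfl
  rw [hrfl, ← hMrhs]
  exact le_antisymm (csSup_le hSne hub) hlb2
end

section
/- For any γ > 0, lim_{t→∞} t^{−1/γ} · log( Σ_{n≥0} (n!)^{−γ} t^n ) = γ. -/
open Real Filter Finset

lemma ml_term_le_exp {x : ℝ} (hx : 0 ≤ x) (n : ℕ) :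
    x ^ n / n.factorial ≤ Real.exp x := by
  refine le_trans ?_ (Real.sum_le_exp_of_nonneg hx (n + 1))
  have : x ^ n / n.factorial = ∑ i ∈ Finset.range (n+1),
      (fun i => if i = n then x ^ i / i.factorial else 0) i := by
    rw [Finset.sum_ite_eq' (Finset.range (n+1)) n]
    simp
  rw [this]
  refine Finset.sum_le_sum fun i _ => ?_
  by_cases h : i = n
  · simp [h]
  · simp [h]
    positivity

lemma ml_pow_le_exp_mul_factorial (n : ℕ) :
    (n : ℝ) ^ n ≤ Real.exp n * n.factorial := by
  have h := ml_term_le_exp (x := (n:ℝ)) (Nat.cast_nonneg n) n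
  have hf : (0:ℝ) < n.factorial := by positivity
  rw [div_le_iff₀ hf] at h
  linarith

lemma ml_factorial_le (n : ℕ) (hn : 1 ≤ n) :
    (n.factorial : ℝ) ≤ n * (n:ℝ) ^ n * Real.exp (2 - n) := by
  induction n with
  | zero => omega
  | succ m ih =>
    rcases Nat.eq_or_lt_of_le hn with h | h
    · simp [← h]
    · have hm : 1 ≤ m := by omega
      have ihm := ih hm
      have hm0 : (0:ℝ) < m := by exact_mod_cast hm
      have hx := Real.exp_pos (1/((m:ℝ)+1))
      have h1 : (m:ℝ) / ((m:ℝ)+1) ≤ (Real.exp (1/((m:ℝ)+1)))⁻¹ := by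
        rw [← Real.exp_neg]
        have h0 := Real.add_one_le_exp (-(1/((m:ℝ)+1)))
        refine le_trans (le_of_eq ?_) h0
        field_simp
        ring
      have h2 : Real.exp (1/((m:ℝ)+1)) ≤ ((m:ℝ)+1) / m := by
        have hm1 : (0:ℝ) < (m:ℝ)+1 := by positivity
        rw [le_div_iff₀ hm0]
        rw [div_le_iff₀ hm1] at h1
        have h3 := mul_le_mul_of_nonneg_right h1 hx.le
        have h4 : (Real.exp (1/((m:ℝ)+1)))⁻¹ * (((m:ℝ)+1) * Real.exp (1/((m:ℝ)+1))) = (m:ℝ)+1 := by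
          field_simp
        rw [← mul_assoc] at h4
        rw [h4] at h3
        linarith
      have key : Real.exp 1 * (m:ℝ) ^ (m+1) ≤ ((m:ℝ)+1) ^ (m+1) := by
        have e1 : Real.exp 1 = (Real.exp (1/((m:ℝ)+1))) ^ (m+1) := by
          rw [← Real.exp_nat_mul]
          congr 1
          field_simp
          simp
        have e2 : (Real.exp (1/((m:ℝ)+1))) ^ (m+1) ≤ (((m:ℝ)+1) / m) ^ (m+1) :=
          pow_le_pow_left₀ hx.le h2 (m+1)
        have e3 : (((m:ℝ)+1) / m) ^ (m+1) * (m:ℝ) ^ (m+1) = ((m:ℝ)+1) ^ (m+1) := by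
          rw [div_pow]
          field_simp
        calc Real.exp 1 * (m:ℝ) ^ (m+1) ≤ (((m:ℝ)+1) / m) ^ (m+1) * (m:ℝ) ^ (m+1) := by
              rw [e1]
              exact mul_le_mul_of_nonneg_right e2 (by positivity)
          _ = ((m:ℝ)+1) ^ (m+1) := e3
      -- finish
      have hE : Real.exp (2 - ((m:ℝ)+1)) * Real.exp 1 = Real.exp (2 - m) := by
        rw [← Real.exp_add]; ring_nf
      have hfact : ((m+1).factorial : ℝ) = ((m:ℝ)+1) * m.factorial := by
        push_cast [Nat.factorial_succ]; ring
      have hgoal : ((m:ℝ)+1) * m.factorial ≤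
          ((m:ℝ)+1) * ((m:ℝ)+1) ^ (m+1) * Real.exp (2 - ((m:ℝ)+1)) := by
        have s1 : (m:ℝ) * (m:ℝ)^m = (m:ℝ)^(m+1) := by ring
        have ihm' : (m.factorial : ℝ) ≤ (m:ℝ)^(m+1) * Real.exp (2 - m) :=
          ihm.trans_eq (by ring)
        have s2 : ((m:ℝ)+1) * m.factorial ≤
            ((m:ℝ)+1) * ((m:ℝ)^(m+1) * Real.exp (2 - m)) :=
          mul_le_mul_of_nonneg_left ihm' (by positivity)
        refine s2.trans ?_
        rw [← hE]
        set E := Real.exp (2 - ((m:ℝ)+1)) with hEdef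
        have hEpos : 0 < E := Real.exp_pos _
        calc ((m:ℝ)+1) * ((m:ℝ)^(m+1) * (E * Real.exp 1))
            = (((m:ℝ)+1) * E) * (Real.exp 1 * (m:ℝ)^(m+1)) := by ring
          _ ≤ (((m:ℝ)+1) * E) * (((m:ℝ)+1)^(m+1)) := by
              exact mul_le_mul_of_nonneg_left key (by positivity)
          _ = ((m:ℝ)+1) * ((m:ℝ)+1)^(m+1) * E := by ring
      rw [hfact]
      push_cast
      exact hgoal

set_option maxHeartbeats 1000000 in
lemma ml_core (γ : ℝ) (hγ : 0 < γ) {t : ℝ} (ht : 0 < t) (hs1 : 1 ≤ t ^ (1/γ)) :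
    (γ - γ * ((3 + Real.log (t^(1/γ))) / (t^(1/γ))) ≤
      t ^ (-(1 / γ)) * Real.log (∑' n : ℕ, (Nat.factorial n : ℝ) ^ (-γ) * t ^ n)) ∧
    (t ^ (-(1 / γ)) * Real.log (∑' n : ℕ, (Nat.factorial n : ℝ) ^ (-γ) * t ^ n) ≤
      γ + ((Real.log (8 + (1 - ((1:ℝ)/2) ^ γ)⁻¹) + Real.log (t^(1/γ))) / (t^(1/γ)))) := by
  have hγ' : γ ≠ 0 := hγ.ne'
  set s : ℝ := t ^ (1/γ) with hs_def
  have hs0 : 0 < s := lt_of_lt_of_le one_pos hs1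
  set a : ℕ → ℝ := fun n => s ^ n / n.factorial with ha_def
  have ha_pos : ∀ n, 0 < a n := fun n => by positivity
  -- rewrite each term
  have hA : ∀ n : ℕ, ((n.factorial : ℝ)) ^ (-γ) * t ^ n = (a n) ^ γ := by
    intro n
    have hfpos : (0:ℝ) < n.factorial := by positivity
    have h1 : (a n) ^ γ = (s ^ n) ^ γ / ((n.factorial : ℝ)) ^ γ :=
      Real.div_rpow (by positivity) hfpos.le γ
    have h2 : (s ^ n) ^ γ = t ^ n := by
      rw [← Real.rpow_natCast s n, hs_def, ← Real.rpow_mul ht.le, ← Real.rpow_mul ht.le]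
      rw [show 1/γ * (n:ℝ) * γ = (n:ℝ) by field_simp]
      exact Real.rpow_natCast t n
    rw [h1, h2, Real.rpow_neg hfpos.le]
    ring
  -- geometric ratio
  set r : ℝ := ((1:ℝ)/2) ^ γ with hr_def
  have hr0 : 0 < r := Real.rpow_pos_of_pos (by norm_num) γ
  have hr1 : r < 1 := Real.rpow_lt_one (by norm_num) (by norm_num) hγ
  -- tail term bound
  have hbound : ∀ n : ℕ, 6 * s ≤ (n:ℝ) → (a n) ^ γ ≤ r ^ n := by
    intro n hn
    have hn0 : (0:ℝ) < n := lt_of_lt_of_le (by linarith) hn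
    have hn0' : 0 < n := by exact_mod_cast hn0
    have hfpos : (0:ℝ) < n.factorial := by positivity
    have h1 : a n ≤ ((1:ℝ)/2) ^ n := by
      have hnn : (0:ℝ) < (n:ℝ)^n := by positivity
      have h2 : a n ≤ s ^ n * Real.exp n / (n:ℝ) ^ n := by
        rw [ha_def]
        simp only
        rw [div_le_div_iff₀ hfpos hnn]
        calc s ^ n * (n:ℝ)^n ≤ s ^ n * (Real.exp n * n.factorial) :=
              mul_le_mul_of_nonneg_left (ml_pow_le_exp_mul_factorial n) (by positivity)
          _ = s ^ n * Real.exp n * n.factorial := by ring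
      refine h2.trans ?_
      have h3 : s ^ n * Real.exp n / (n:ℝ) ^ n = (s * Real.exp 1 / n) ^ n := by
        rw [div_pow, mul_pow, ← Real.exp_nat_mul, mul_one]
      rw [h3]
      refine pow_le_pow_left₀ (by positivity) ?_ n
      rw [div_le_div_iff₀ hn0 (by norm_num : (0:ℝ) < 2)]
      have he : Real.exp 1 < 2.7182818286 := Real.exp_one_lt_d9
      nlinarith
    calc (a n) ^ γ ≤ (((1:ℝ)/2) ^ n) ^ γ :=
          Real.rpow_le_rpow (ha_pos n).le h1 hγ.le
      _ = r ^ n := by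
          rw [← Real.rpow_natCast ((1:ℝ)/2) n, ← Real.rpow_mul (by norm_num), mul_comm,
            Real.rpow_mul (by norm_num), hr_def, Real.rpow_natCast]
  set N : ℕ := ⌈6 * s⌉₊ with hN_def
  have hN_ge : 6 * s ≤ (N:ℝ) := Nat.le_ceil _
  have htail : ∀ i : ℕ, (a (i + (N+1))) ^ γ ≤ r ^ i := by
    intro i
    have h1 : 6 * s ≤ ((i + (N+1) : ℕ) : ℝ) := by
      push_cast
      linarith [Nat.cast_nonneg (α := ℝ) i]
    refine (hbound _ h1).trans ?_
    calc r ^ (i + (N+1)) = r ^ i * r ^ (N+1) := pow_add r i (N+1)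
      _ ≤ r ^ i * 1 := mul_le_mul_of_nonneg_left (pow_le_one₀ hr0.le hr1.le) (by positivity)
      _ = r ^ i := mul_one _
  have hsum : Summable (fun n => (a n) ^ γ) := by
    refine (summable_nat_add_iff (N+1)).mp ?_
    exact Summable.of_nonneg_of_le (fun i => Real.rpow_nonneg (ha_pos _).le γ) htail
      (summable_geometric_of_lt_one hr0.le hr1)
  have hS_eq : (∑' n : ℕ, (Nat.factorial n : ℝ) ^ (-γ) * t ^ n) = ∑' n, (a n) ^ γ :=
    tsum_congr hA
  set S : ℝ := ∑' n, (a n) ^ γ with hS_def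
  -- lower bound
  set m : ℕ := ⌊s⌋₊ with hm_def
  have hm1 : 1 ≤ m := by
    rw [hm_def]
    exact Nat.le_floor (by exact_mod_cast hs1)
  have hm0 : (0:ℝ) < m := by exact_mod_cast hm1
  have hms : (m:ℝ) ≤ s := Nat.floor_le hs0.le
  have hsm : s - 1 ≤ (m:ℝ) := (Nat.sub_one_lt_floor s).le
  have hfpos : (0:ℝ) < m.factorial := by positivity
  have hDpos : (0:ℝ) < (m:ℝ) * (m:ℝ) ^ m * Real.exp (2 - m) := by positivity
  have d2 : s ^ m / ((m:ℝ) * (m:ℝ) ^ m * Real.exp (2 - m)) ≤ a m :=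
    div_le_div_of_nonneg_left (by positivity) hfpos (ml_factorial_le m hm1)
  have d3 : Real.exp (s - 3) / s ≤ s ^ m / ((m:ℝ) * (m:ℝ) ^ m * Real.exp (2 - m)) := by
    rw [div_le_div_iff₀ hs0 hDpos]
    have e1 : Real.exp (s - 3) * Real.exp (2 - (m:ℝ)) ≤ 1 := by
      rw [← Real.exp_add]
      rw [Real.exp_le_one_iff]
      linarith
    have e2 : (m:ℝ) ^ m ≤ s ^ m := pow_le_pow_left₀ hm0.le hms m
    calc Real.exp (s - 3) * ((m:ℝ) * (m:ℝ) ^ m * Real.exp (2 - m))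
        = (Real.exp (s - 3) * Real.exp (2 - (m:ℝ))) * ((m:ℝ) * (m:ℝ) ^ m) := by ring
      _ ≤ 1 * (s * s ^ m) :=
          mul_le_mul e1 (mul_le_mul hms e2 (by positivity) hs0.le) (by positivity) one_pos.le
      _ = s ^ m * s := by ring
  have ham : Real.exp (s - 3) / s ≤ a m := d3.trans d2
  have hlow_pos : (0:ℝ) < (Real.exp (s - 3) / s) ^ γ := by positivity
  have hle : (Real.exp (s - 3) / s) ^ γ ≤ S := by
    refine le_trans (Real.rpow_le_rpow (by positivity) ham hγ.le) ?_
    exact Summable.le_tsum hsum m (fun j _ => Real.rpow_nonneg (ha_pos j).le γ)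
  have hS_pos : 0 < S := lt_of_lt_of_le hlow_pos hle
  have hlogS_lb : γ * ((s - 3) - Real.log s) ≤ Real.log S := by
    have h1 : Real.log ((Real.exp (s - 3) / s) ^ γ) ≤ Real.log S :=
      Real.log_le_log hlow_pos hle
    rw [Real.log_rpow (by positivity), Real.log_div (Real.exp_ne_zero _) hs0.ne',
      Real.log_exp] at h1
    exact h1
  -- upper bound
  set C : ℝ := (1 - r)⁻¹ with hC_def
  have hC_pos : 0 < C := by
    rw [hC_def]
    exact inv_pos.mpr (by linarith)
  have hfront : ∑ i ∈ Finset.range (N+1), (a i) ^ γ ≤ ((N:ℝ)+1) * Real.exp (γ * s) := by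
    have h1 : ∀ i ∈ Finset.range (N+1), (a i) ^ γ ≤ Real.exp (γ * s) := by
      intro i _
      have h2 : a i ≤ Real.exp s := ml_term_le_exp hs0.le i
      calc (a i) ^ γ ≤ (Real.exp s) ^ γ := Real.rpow_le_rpow (ha_pos i).le h2 hγ.le
        _ = Real.exp (γ * s) := by rw [mul_comm, Real.exp_mul]
    calc ∑ i ∈ Finset.range (N+1), (a i) ^ γ
        ≤ (Finset.range (N+1)).card • Real.exp (γ * s) :=
          Finset.sum_le_card_nsmul _ _ _ h1
      _ = ((N:ℝ)+1) * Real.exp (γ * s) := by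
          rw [Finset.card_range, nsmul_eq_mul]
          push_cast
          ring
  have htailsum : (∑' i, (a (i + (N+1))) ^ γ) ≤ C := by
    have h1 : (∑' i, (a (i + (N+1))) ^ γ) ≤ ∑' i, r ^ i :=
      Summable.tsum_le_tsum htail ((summable_nat_add_iff (f := fun n => (a n) ^ γ) (N+1)).mpr hsum)
        (summable_geometric_of_lt_one hr0.le hr1)
    rwa [tsum_geometric_of_lt_one hr0.le hr1] at h1
  have hSub : S ≤ (8 + C) * s * Real.exp (γ * s) := by
    have hsplit := Summable.sum_add_tsum_nat_add (f := fun n => (a n) ^ γ) (N+1) hsum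
    have hexp1 : (1:ℝ) ≤ Real.exp (γ * s) := Real.one_le_exp (by positivity)
    have hNle : (N:ℝ) + 1 ≤ 6 * s + 2 := by
      have := Nat.ceil_lt_add_one (by positivity : (0:ℝ) ≤ 6 * s)
      rw [← hN_def] at this
      linarith
    calc S = (∑ i ∈ Finset.range (N+1), (a i) ^ γ) + ∑' i, (a (i + (N+1))) ^ γ := hsplit.symm
      _ ≤ ((N:ℝ)+1) * Real.exp (γ * s) + C := add_le_add hfront htailsum
      _ ≤ (6 * s + 2) * Real.exp (γ * s) + C * Real.exp (γ * s) := by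
          have := mul_le_mul_of_nonneg_right hNle (Real.exp_nonneg (γ * s))
          nlinarith
      _ = (6 * s + 2 + C) * Real.exp (γ * s) := by ring
      _ ≤ ((8 + C) * s) * Real.exp (γ * s) := by
          have : 6 * s + 2 + C ≤ (8 + C) * s := by nlinarith
          exact mul_le_mul_of_nonneg_right this (Real.exp_nonneg _)
      _ = (8 + C) * s * Real.exp (γ * s) := by ring
  have hlogS_ub : Real.log S ≤ Real.log (8 + C) + Real.log s + γ * s := by
    have h1 : Real.log S ≤ Real.log ((8 + C) * s * Real.exp (γ * s)) :=
      Real.log_le_log hS_pos hSub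
    rwa [Real.log_mul (by positivity) (Real.exp_ne_zero _),
      Real.log_mul (by positivity) hs0.ne', Real.log_exp] at h1
  -- conclude
  have hrp : t ^ (-(1/γ)) = s⁻¹ := by
    rw [Real.rpow_neg ht.le, hs_def]
  constructor
  · rw [hS_eq, hrp]
    have h1 := mul_le_mul_of_nonneg_left hlogS_lb (inv_nonneg.mpr hs0.le)
    refine le_trans (le_of_eq ?_) h1
    field_simp
    ring
  · rw [hS_eq, hrp]
    have h1 := mul_le_mul_of_nonneg_left hlogS_ub (inv_nonneg.mpr hs0.le)
    refine le_trans h1 (le_of_eq ?_)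
    field_simp
    ring

theorem mittag_leffler_log_asymptotics (γ : ℝ) (hγ : 0 < γ) :
    Tendsto (fun t : ℝ =>
        t ^ (-(1 / γ)) * Real.log (∑' n : ℕ, (Nat.factorial n : ℝ) ^ (-γ) * t ^ n))
      atTop (nhds γ) := by
  have hγ' : (0:ℝ) < 1/γ := by positivity
  set K : ℝ := 8 + (1 - ((1:ℝ)/2) ^ γ)⁻¹ with hK_def
  have hsT : Tendsto (fun t : ℝ => t ^ (1/γ)) atTop atTop := tendsto_rpow_atTop hγ'
  have hlogdiv : Tendsto (fun s : ℝ => Real.log s / s) atTop (nhds 0) :=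
    Real.isLittleO_log_id_atTop.tendsto_div_nhds_zero
  have hlo : Tendsto (fun s : ℝ => γ - γ * ((3 + Real.log s) / s)) atTop (nhds γ) := by
    have l1 : Tendsto (fun s : ℝ => (3 + Real.log s) / s) atTop (nhds 0) := by
      have h3 : Tendsto (fun s : ℝ => (3:ℝ) / s) atTop (nhds 0) :=
        Filter.Tendsto.div_atTop tendsto_const_nhds tendsto_id
      have := h3.add hlogdiv
      simpa [add_div] using this
    have := (tendsto_const_nhds (x := γ)).sub ((tendsto_const_nhds (x := γ)).mul l1)
    simpa using this
  have hup : Tendsto (fun s : ℝ => γ + ((Real.log K + Real.log s) / s)) atTop (nhds γ) := by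
    have l1 : Tendsto (fun s : ℝ => (Real.log K + Real.log s) / s) atTop (nhds 0) := by
      have h3 : Tendsto (fun s : ℝ => Real.log K / s) atTop (nhds 0) :=
        Filter.Tendsto.div_atTop tendsto_const_nhds tendsto_id
      have := h3.add hlogdiv
      simpa [add_div] using this
    have := (tendsto_const_nhds (x := γ)).add l1
    simpa using this
  refine tendsto_of_tendsto_of_tendsto_of_le_of_le' (hlo.comp hsT) (hup.comp hsT) ?_ ?_
  · filter_upwards [eventually_gt_atTop 0, hsT.eventually_ge_atTop 1] with t ht hs1
    exact (ml_core γ hγ ht hs1).1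
  · filter_upwards [eventually_gt_atTop 0, hsT.eventually_ge_atTop 1] with t ht hs1
    exact (ml_core γ hγ ht hs1).2
end
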